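/- Invariance of the first exchange invariant along an A_m⁽¹⁾ X-variable sequence: if r : ℤ → F is a sequence of nonzero elements satisfying r(j+1) = (1 + x₁(j))·r(j) for all j ∈ ℤ, then for every j ∈ ℤ one has r(j)·(1 + x₁(j) + x₁(j)·N(j)) = r(0)·K₁, where K₁ := 1 + x₁(0)·(1 + x₂(0)·(1 + ⋯ x_m(0)·(1 + x_{m+1}(0))⋯)). -/

import Mathlib

/-- The nested expression `x_{m+1-k}(j)·(1 + x_{m+2-k}(j)·(1 + ⋯ x_m(j)·(1 + x_{m+1}(j))⋯))`
built from the X-variables `x i j`; `nestAux x m j (m-1)` is the expression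
`N(j) = x₂(j)·(1 + x₃(j)·(1 + ⋯ x_m(j)·(1 + x_{m+1}(j))⋯))`. -/
def nestAux {F : Type*} [Field F] (x : ℕ → ℤ → F) (m : ℕ) (j : ℤ) : ℕ → F
  | 0 => x (m + 1) j
  | k + 1 => x (m - k) j * (1 + nestAux x m j k)

/-- Invariance of the first exchange invariant along an `A_m⁽¹⁾` X-variable sequence. -/
theorem am1_first_invariant {F : Type*} [Field F] (m : ℕ) (hm : 2 ≤ m)
    (x : ℕ → ℤ → F)
    (hx₁ : ∀ j : ℤ, x 1 j ≠ 0) (hx₁' : ∀ j : ℤ, 1 + x 1 j ≠ 0)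
    (hmutA : ∀ j : ℤ, x 1 (j + 1) * (1 + x 1 j) = x 2 j * x 1 j)
    (hmutB : ∀ j : ℤ, x m (j + 1) * (1 + x 1 j) = x (m + 1) j * x 1 j)
    (hmutC : ∀ j : ℤ, x (m + 1) (j + 1) * x 1 j = 1)
    (hmutD : ∀ j : ℤ, ∀ i : ℕ, 2 ≤ i → i ≤ m - 1 → x i (j + 1) = x (i + 1) j)
    (r : ℤ → F) (hr : ∀ j : ℤ, r j ≠ 0)
    (hrec : ∀ j : ℤ, r (j + 1) = (1 + x 1 j) * r j) :
    ∀ j : ℤ, r j * (1 + x 1 j + x 1 j * nestAux x m j (m - 1))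
      = r 0 * (1 + x 1 0 * (1 + nestAux x m 0 (m - 1))) := by
  -- shift lemma: nestAux at time j+1 and depth k+1 equals nestAux at time j depth k
  have hshift : ∀ j : ℤ, ∀ k : ℕ, k ≤ m - 2 →
      nestAux x m (j + 1) (k + 1) = nestAux x m j k := by
    intro j k
    induction k with
    | zero =>
      intro _
      show x (m - 0) (j + 1) * (1 + nestAux x m (j + 1) 0) = x (m + 1) j
      have h0 : nestAux x m (j + 1) 0 = x (m + 1) (j + 1) := rfl
      rw [h0, Nat.sub_zero]
      have hB := hmutB j
      have hC := hmutC j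
      have ha := hx₁ j
      have ha' := hx₁' j
      have hinv : x (m + 1) (j + 1) = (x 1 j)⁻¹ := by
        field_simp
        exact hC
      have hxm : x m (j + 1) = x (m + 1) j * x 1 j / (1 + x 1 j) := by
        rw [eq_div_iff ha']
        exact hB
      rw [hinv, hxm]
      field_simp
      ring
    | succ k ih =>
      intro hk
      have hk' : k ≤ m - 2 := by omega
      show x (m - (k + 1)) (j + 1) * (1 + nestAux x m (j + 1) (k + 1))
          = x (m - k) j * (1 + nestAux x m j k)
      rw [ih hk']
      have hD := hmutD j (m - (k + 1)) (by omega) (by omega)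
      have : m - (k + 1) + 1 = m - k := by omega
      rw [hD, this]
  -- one-step invariance
  have hstep : ∀ j : ℤ, r (j + 1) * (1 + x 1 (j + 1) + x 1 (j + 1) * nestAux x m (j + 1) (m - 1))
      = r j * (1 + x 1 j + x 1 j * nestAux x m j (m - 1)) := by
    intro j
    have hm1 : m - 1 = (m - 2) + 1 := by omega
    have hN1 : nestAux x m (j + 1) (m - 1) = nestAux x m j (m - 2) := by
      rw [hm1]; exact hshift j (m - 2) le_rfl
    have hNj : nestAux x m j (m - 1) = x 2 j * (1 + nestAux x m j (m - 2)) := by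
      rw [hm1]
      show x (m - (m - 2)) j * (1 + nestAux x m j (m - 2)) = _
      congr 2
      omega
    rw [hN1, hNj, hrec j]
    linear_combination (r j * (1 + nestAux x m j (m - 2))) * hmutA j
  -- induction over ℤ
  intro j
  have key : ∀ j : ℤ, r j * (1 + x 1 j + x 1 j * nestAux x m j (m - 1))
      = r 0 * (1 + x 1 0 + x 1 0 * nestAux x m 0 (m - 1)) := by
    intro j
    induction j using Int.induction_on with
    | zero => rfl
    | succ k ih => rw [hstep k]; exact ih
    | pred k ih =>
      have := hstep (-(k : ℤ) - 1)
      rw [show (-(k : ℤ) - 1) + 1 = -k by ring] at this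
      rw [← this]; exact ih
  rw [key j]
  ring
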